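/- (Grouped force on the last bead of a particle in bosonic PIMD with PBC.) With Z(r) = (1/N!)·∑_{σ} ∑_{w} exp(−βE^{σ,w}(r)) and V = −(1/β)·log Z, and with Pr denoting probabilities of events under the Boltzmann distribution Pr(σ,w) = exp(−βE^{σ,w})/(N!·Z), for every particle ℓ and coordinate i: −∂V/∂(r_ℓ^P)_i = ∑_{w∈Λ} Pr(w_ℓ^{P−1} = w) · (−2c)·(r_ℓ^P − r_ℓ^{P−1} − w·L)_i + ∑_{ℓ'=1}^{N} ∑_{w∈Λ} Pr(σ(ℓ) = ℓ' and w_ℓ^P = w) · (−2c)·(r_ℓ^P + w·L − r_{ℓ'}^1)_i (requiring P ≥ 2 for the first term). -/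

import Mathlib

open Finset Real

noncomputable section

/-- Winding window: integer vectors `w : Fin d → ℤ` with `-W ≤ w i ≤ W` in every coordinate. -/
def windowSet (d W : ℕ) : Finset (Fin d → ℤ) :=
  Fintype.piFinset fun _ => Finset.Icc (-(W : ℤ)) (W : ℤ)

/-- The set of all winding assignments `w : Fin N → Fin P → Λ`. -/
def WAll (N P d W : ℕ) : Finset (Fin N → Fin P → Fin d → ℤ) :=
  Fintype.piFinset fun _ => Fintype.piFinset fun _ => windowSet d W

/-- The last bead (bead `P`, zero-indexed `P-1`). -/
def lastIdx (P : ℕ) [NeZero P] : Fin P :=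
  ⟨P - 1, Nat.sub_lt (Nat.pos_of_ne_zero (NeZero.ne P)) Nat.one_pos⟩

/-- Bead `P-1` (zero-indexed `P-2`; meaningful for `P ≥ 2`). -/
def prevIdx (P : ℕ) [NeZero P] : Fin P :=
  ⟨P - 2, Nat.sub_lt (Nat.pos_of_ne_zero (NeZero.ne P)) Nat.two_pos⟩

/-- Configuration spring energy `E^{σ,w}`: the bead after the last bead of particle `ℓ`
is the first bead of particle `σ(ℓ)`. -/
def Eperm (N P d : ℕ) [NeZero P] (c L : ℝ) (r : Fin N → Fin P → Fin d → ℝ)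
    (σ : Equiv.Perm (Fin N)) (w : Fin N → Fin P → Fin d → ℤ) : ℝ :=
  c * ∑ ℓ : Fin N, ∑ j : Fin P, ∑ i : Fin d,
    (r ℓ j i + (w ℓ j i : ℝ) * L -
      (if h : j.val + 1 < P then r ℓ ⟨j.val + 1, h⟩ i else r (σ ℓ) 0 i)) ^ 2

/-- Bosonic configuration sum `Z(r) = (1/N!) ∑_σ ∑_w exp(-βE^{σ,w}(r))`. -/
def Zb (N P d W : ℕ) [NeZero P] (β c L : ℝ) (r : Fin N → Fin P → Fin d → ℝ) : ℝ :=
  (1 / (Nat.factorial N : ℝ)) *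
    ∑ σ : Equiv.Perm (Fin N), ∑ w ∈ WAll N P d W, Real.exp (-(β * Eperm N P d c L r σ w))

/-- Bosonic ring-polymer potential with PBC: `V(r) = -(1/β) log Z(r)`. -/
def Vb (N P d W : ℕ) [NeZero P] (β c L : ℝ) (r : Fin N → Fin P → Fin d → ℝ) : ℝ :=
  -(1 / β) * Real.log (Zb N P d W β c L r)

/-- Replace the `i`-th coordinate of bead `j` of particle `ℓ` by `t`. -/
def updR {N P d : ℕ} (r : Fin N → Fin P → Fin d → ℝ) (ℓ : Fin N) (j : Fin P) (i : Fin d)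
    (t : ℝ) : Fin N → Fin P → Fin d → ℝ :=
  Function.update r ℓ (Function.update (r ℓ) j (Function.update (r ℓ j) i t))


lemma updR_apply {N P d : ℕ} (r : Fin N → Fin P → Fin d → ℝ) (ℓ : Fin N) (j : Fin P)
    (i : Fin d) (t : ℝ) (ℓ' : Fin N) (j' : Fin P) (i' : Fin d) :
    updR r ℓ j i t ℓ' j' i' = if ℓ' = ℓ ∧ j' = j ∧ i' = i then t else r ℓ' j' i' := by
  unfold updR
  rcases eq_or_ne ℓ' ℓ with h | h
  · subst h
    rcases eq_or_ne j' j with h2 | h2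
    · subst h2
      rcases eq_or_ne i' i with h3 | h3
      · subst h3; simp
      · simp [Function.update_apply, h3]
    · simp [Function.update_apply, h2]
  · simp [Function.update_apply, h]

lemma updR_self {N P d : ℕ} (r : Fin N → Fin P → Fin d → ℝ) (ℓ : Fin N) (j : Fin P)
    (i : Fin d) : updR r ℓ j i (r ℓ j i) = r := by
  funext a b c'
  rw [updR_apply]
  split_ifs with h
  · obtain ⟨h1, h2, h3⟩ := h; subst h1; subst h2; subst h3; rfl
  · rfl

lemma collapse {N P d : ℕ} (g : Fin N → Fin P → Fin d → ℝ) (ℓ : Fin N) (j' : Fin P) (i : Fin d) :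
    (∑ ℓ' : Fin N, ∑ j : Fin P, ∑ i' : Fin d,
        if ℓ' = ℓ ∧ j = j' ∧ i' = i then g ℓ' j i' else 0) = g ℓ j' i := by
  rw [Fintype.sum_eq_single ℓ]
  · rw [Fintype.sum_eq_single j']
    · rw [Fintype.sum_eq_single i]
      · simp
      · intro b hb; simp [hb]
    · intro b hb; simp [hb]
  · intro b hb; simp [hb]

lemma hasDerivAt_Eperm (N P d : ℕ) [NeZero P] (hP : 2 ≤ P) (c L : ℝ)
    (r : Fin N → Fin P → Fin d → ℝ) (ℓ : Fin N) (i : Fin d)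
    (σ : Equiv.Perm (Fin N)) (w : Fin N → Fin P → Fin d → ℤ) :
    HasDerivAt (fun t => Eperm N P d c L (updR r ℓ (lastIdx P) i t) σ w)
      (c * (2 * (r ℓ (lastIdx P) i + (w ℓ (lastIdx P) i : ℝ) * L - r (σ ℓ) 0 i)
          - 2 * (r ℓ (prevIdx P) i + (w ℓ (prevIdx P) i : ℝ) * L - r ℓ (lastIdx P) i)))
      (r ℓ (lastIdx P) i) := by
  have hlast : (lastIdx P).val = P - 1 := rfl
  have hprev : (prevIdx P).val = P - 2 := rfl
  have hne : prevIdx P ≠ lastIdx P := by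
    intro h
    have := congrArg Fin.val h
    simp [hlast, hprev] at this
    omega
  set t₀ := r ℓ (lastIdx P) i with ht₀
  -- derivative of each summand
  have key : ∀ (ℓ' : Fin N) (j : Fin P) (i' : Fin d),
      HasDerivAt (fun t =>
          (updR r ℓ (lastIdx P) i t ℓ' j i' + (w ℓ' j i' : ℝ) * L -
            (if h : j.val + 1 < P then updR r ℓ (lastIdx P) i t ℓ' ⟨j.val + 1, h⟩ i'
              else updR r ℓ (lastIdx P) i t (σ ℓ') 0 i')) ^ 2)
        (2 * (r ℓ' j i' + (w ℓ' j i' : ℝ) * L -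
            (if h : j.val + 1 < P then r ℓ' ⟨j.val + 1, h⟩ i' else r (σ ℓ') 0 i')) *
          ((if ℓ' = ℓ ∧ j = lastIdx P ∧ i' = i then 1 else 0)
            - (if ℓ' = ℓ ∧ j = prevIdx P ∧ i' = i then 1 else 0))) t₀ := by
    intro ℓ' j i'
    have hA : HasDerivAt (fun t => updR r ℓ (lastIdx P) i t ℓ' j i')
        (if ℓ' = ℓ ∧ j = lastIdx P ∧ i' = i then 1 else 0) t₀ := by
      by_cases h : ℓ' = ℓ ∧ j = lastIdx P ∧ i' = i
      · simp only [updR_apply, if_pos h]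
        exact hasDerivAt_id t₀
      · simp only [updR_apply, if_neg h]
        exact hasDerivAt_const t₀ _
    have hB : HasDerivAt (fun t =>
          if h : j.val + 1 < P then updR r ℓ (lastIdx P) i t ℓ' ⟨j.val + 1, h⟩ i'
            else updR r ℓ (lastIdx P) i t (σ ℓ') 0 i')
        (if ℓ' = ℓ ∧ j = prevIdx P ∧ i' = i then 1 else 0) t₀ := by
      by_cases h : j.val + 1 < P
      · simp only [dif_pos h]
        have hiff : (⟨j.val + 1, h⟩ : Fin P) = lastIdx P ↔ j = prevIdx P := by
          constructor
          · intro he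
            have := congrArg Fin.val he
            simp [hlast] at this
            apply Fin.ext
            simp [hprev]
            omega
          · intro he
            subst he
            apply Fin.ext
            simp [hlast, hprev]
            omega
        by_cases h2 : ℓ' = ℓ ∧ j = prevIdx P ∧ i' = i
        · have : ℓ' = ℓ ∧ (⟨j.val + 1, h⟩ : Fin P) = lastIdx P ∧ i' = i :=
            ⟨h2.1, hiff.mpr h2.2.1, h2.2.2⟩
          simp only [updR_apply, if_pos this, if_pos h2]
          exact hasDerivAt_id t₀
        · have : ¬(ℓ' = ℓ ∧ (⟨j.val + 1, h⟩ : Fin P) = lastIdx P ∧ i' = i) := by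
            intro hc
            exact h2 ⟨hc.1, hiff.mp hc.2.1, hc.2.2⟩
          simp only [updR_apply, if_neg this, if_neg h2]
          exact hasDerivAt_const t₀ _
      · simp only [dif_neg h]
        have h0 : (0 : Fin P) ≠ lastIdx P := by
          intro he
          have := congrArg Fin.val he
          simp [hlast] at this
          omega
        have hnst : ¬(σ ℓ' = ℓ ∧ (0 : Fin P) = lastIdx P ∧ i' = i) := fun hc => h0 hc.2.1
        have hjne : ¬(ℓ' = ℓ ∧ j = prevIdx P ∧ i' = i) := by
          intro hc
          have := congrArg Fin.val hc.2.1
          simp [hprev] at this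
          have : j.val + 1 < P := by omega
          exact h this
        simp only [updR_apply, if_neg hnst, if_neg hjne]
        exact hasDerivAt_const t₀ _
    have := ((hA.add_const ((w ℓ' j i' : ℝ) * L)).sub hB).pow 2
    refine this.congr_deriv ?_
    rw [ht₀]; simp only [Pi.sub_apply, updR_self]
    norm_num
  have hsum' : HasDerivAt (fun t => ∑ ℓ' : Fin N, ∑ j : Fin P, ∑ i' : Fin d,
      (updR r ℓ (lastIdx P) i t ℓ' j i' + (w ℓ' j i' : ℝ) * L -
        (if h : j.val + 1 < P then updR r ℓ (lastIdx P) i t ℓ' ⟨j.val + 1, h⟩ i'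
          else updR r ℓ (lastIdx P) i t (σ ℓ') 0 i')) ^ 2)
    (∑ ℓ' : Fin N, ∑ j : Fin P, ∑ i' : Fin d,
      2 * (r ℓ' j i' + (w ℓ' j i' : ℝ) * L -
        (if h : j.val + 1 < P then r ℓ' ⟨j.val + 1, h⟩ i' else r (σ ℓ') 0 i')) *
      ((if ℓ' = ℓ ∧ j = lastIdx P ∧ i' = i then 1 else 0)
        - (if ℓ' = ℓ ∧ j = prevIdx P ∧ i' = i then 1 else 0))) t₀ :=
    HasDerivAt.fun_sum fun ℓ' _ => HasDerivAt.fun_sum fun j _ => HasDerivAt.fun_sum fun i' _ => key ℓ' j i'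
  have hsum := hsum'.const_mul c
  simp only [Eperm]
  refine hsum.congr_deriv ?_
  congr 1
  simp only [mul_sub, Finset.sum_sub_distrib, mul_ite, mul_one, mul_zero]
  have c1 := collapse (fun ℓ' j i' => 2 * (r ℓ' j i' + (w ℓ' j i' : ℝ) * L) -
      2 * (if h : j.val + 1 < P then r ℓ' ⟨j.val + 1, h⟩ i' else r (σ ℓ') 0 i')) ℓ (lastIdx P) i
  have c2 := collapse (fun ℓ' j i' => 2 * (r ℓ' j i' + (w ℓ' j i' : ℝ) * L) -
      2 * (if h : j.val + 1 < P then r ℓ' ⟨j.val + 1, h⟩ i' else r (σ ℓ') 0 i')) ℓ (prevIdx P) i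
  rw [c1, c2]
  have h1 : ¬((lastIdx P).val + 1 < P) := by simp only [hlast]; omega
  have h2 : (prevIdx P).val + 1 < P := by simp only [hprev]; omega
  have e2 : (⟨(prevIdx P).val + 1, h2⟩ : Fin P) = lastIdx P := by
    apply Fin.ext; simp only [hlast, hprev]; omega
  rw [dif_neg h1, dif_pos h2, e2]

lemma WAll_nonempty (N P d W : ℕ) : (WAll N P d W).Nonempty := by
  refine ⟨fun _ _ _ => 0, ?_⟩
  simp only [WAll, windowSet, Fintype.mem_piFinset, Finset.mem_Icc]
  intro a b c
  omega

lemma mem_windowSet_of_mem_WAll {N P d W : ℕ} {w : Fin N → Fin P → Fin d → ℤ}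
    (hw : w ∈ WAll N P d W) (ℓ : Fin N) (j : Fin P) : w ℓ j ∈ windowSet d W :=
  (Fintype.mem_piFinset.mp ((Fintype.mem_piFinset.mp hw) ℓ)) j

lemma Zb_pos (N P d W : ℕ) [NeZero P] (β c L : ℝ) (r : Fin N → Fin P → Fin d → ℝ) :
    0 < Zb N P d W β c L r := by
  unfold Zb
  apply mul_pos
  · positivity
  · apply Finset.sum_pos (fun σ _ => Finset.sum_pos (fun w _ => Real.exp_pos _)
      (WAll_nonempty N P d W)) Finset.univ_nonempty

/-- grouped force on the last bead of a particle in bosonic PIMD with PBC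
(`P ≥ 2`). Minus the partial derivative of `V` w.r.t. `(r_ℓ^P)_i` equals the contribution
of the interior spring from bead `P-1`, weighted by the marginal winding probability, plus
the contributions of the exterior spring, weighted by the joint connectivity–winding
probabilities. -/
theorem stmt13 (N P d W : ℕ) [NeZero N] [NeZero P] (hP : 2 ≤ P) (hd : 0 < d)
    (β L c : ℝ) (hβ : 0 < β) (hL : 0 < L) (hc : 0 < c)
    (r : Fin N → Fin P → Fin d → ℝ) (ℓ : Fin N) (i : Fin d) :
    HasDerivAt (fun t => Vb N P d W β c L (updR r ℓ (lastIdx P) i t))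
      (-((∑ w ∈ windowSet d W,
            ((∑ σ : Equiv.Perm (Fin N),
                ∑ w' ∈ (WAll N P d W).filter (fun w' => w' ℓ (prevIdx P) = w),
                  Real.exp (-(β * Eperm N P d c L r σ w'))) /
                ((Nat.factorial N : ℝ) * Zb N P d W β c L r)) *
              ((-2 * c) * (r ℓ (lastIdx P) i - r ℓ (prevIdx P) i - (w i : ℝ) * L))) +
          ∑ ℓ' : Fin N, ∑ w ∈ windowSet d W,
            ((∑ σ ∈ Finset.univ.filter (fun σ : Equiv.Perm (Fin N) => σ ℓ = ℓ'),
                ∑ w' ∈ (WAll N P d W).filter (fun w' => w' ℓ (lastIdx P) = w),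
                  Real.exp (-(β * Eperm N P d c L r σ w'))) /
                ((Nat.factorial N : ℝ) * Zb N P d W β c L r)) *
              ((-2 * c) * (r ℓ (lastIdx P) i + (w i : ℝ) * L - r ℓ' 0 i))))
      (r ℓ (lastIdx P) i) := by
  have hZpos : 0 < Zb N P d W β c L r := Zb_pos N P d W β c L r
  set t₀ := r ℓ (lastIdx P) i with ht₀
  set Dv : Equiv.Perm (Fin N) → (Fin N → Fin P → Fin d → ℤ) → ℝ := fun σ w =>
    c * (2 * (r ℓ (lastIdx P) i + (w ℓ (lastIdx P) i : ℝ) * L - r (σ ℓ) 0 i)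
        - 2 * (r ℓ (prevIdx P) i + (w ℓ (prevIdx P) i : ℝ) * L - r ℓ (lastIdx P) i)) with hDv
  have hexp : ∀ (σ : Equiv.Perm (Fin N)) (w : Fin N → Fin P → Fin d → ℤ),
      HasDerivAt (fun t => Real.exp (-(β * Eperm N P d c L (updR r ℓ (lastIdx P) i t) σ w)))
        (Real.exp (-(β * Eperm N P d c L r σ w)) * (-(β * Dv σ w))) t₀ := by
    intro σ w
    have h := (((hasDerivAt_Eperm N P d hP c L r ℓ i σ w).const_mul β).fun_neg).exp
    rw [show updR r ℓ (lastIdx P) i (r ℓ (lastIdx P) i) = r from updR_self r ℓ (lastIdx P) i] at h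
    exact h
  have hZsum : HasDerivAt (fun t => ∑ σ : Equiv.Perm (Fin N), ∑ w ∈ WAll N P d W,
        Real.exp (-(β * Eperm N P d c L (updR r ℓ (lastIdx P) i t) σ w)))
      (∑ σ : Equiv.Perm (Fin N), ∑ w ∈ WAll N P d W,
        Real.exp (-(β * Eperm N P d c L r σ w)) * (-(β * Dv σ w))) t₀ :=
    HasDerivAt.fun_sum fun σ _ => HasDerivAt.fun_sum fun w _ => hexp σ w
  have hZ := hZsum.const_mul (1 / (Nat.factorial N : ℝ))
  have hz0 : Zb N P d W β c L (updR r ℓ (lastIdx P) i t₀) = Zb N P d W β c L r := by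
    rw [ht₀, updR_self]
  have hZb : HasDerivAt (fun t => Zb N P d W β c L (updR r ℓ (lastIdx P) i t))
      (1 / (Nat.factorial N : ℝ) * ∑ σ : Equiv.Perm (Fin N), ∑ w ∈ WAll N P d W,
        Real.exp (-(β * Eperm N P d c L r σ w)) * (-(β * Dv σ w))) t₀ := hZ
  have hne : Zb N P d W β c L (updR r ℓ (lastIdx P) i t₀) ≠ 0 := by
    rw [hz0]; exact hZpos.ne'
  have hlog := hZb.log hne
  rw [hz0] at hlog
  have hV := hlog.const_mul (-(1 / β))
  simp only [Vb]
  refine hV.congr_deriv ?_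
  -- Notation
  have hT1 : (∑ σ : Equiv.Perm (Fin N), ∑ w ∈ WAll N P d W,
        Real.exp (-(β * Eperm N P d c L r σ w)) *
          ((-2 * c) * (r ℓ (lastIdx P) i - r ℓ (prevIdx P) i - (w ℓ (prevIdx P) i : ℝ) * L)))
      = ∑ v ∈ windowSet d W,
          (∑ σ : Equiv.Perm (Fin N), ∑ w' ∈ (WAll N P d W).filter (fun w' => w' ℓ (prevIdx P) = v),
            Real.exp (-(β * Eperm N P d c L r σ w'))) *
          ((-2 * c) * (r ℓ (lastIdx P) i - r ℓ (prevIdx P) i - (v i : ℝ) * L)) := by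
    have step1 : ∀ σ : Equiv.Perm (Fin N),
        (∑ w ∈ WAll N P d W, Real.exp (-(β * Eperm N P d c L r σ w)) *
          ((-2 * c) * (r ℓ (lastIdx P) i - r ℓ (prevIdx P) i - (w ℓ (prevIdx P) i : ℝ) * L)))
        = ∑ v ∈ windowSet d W, ∑ w' ∈ (WAll N P d W).filter (fun w' => w' ℓ (prevIdx P) = v),
            Real.exp (-(β * Eperm N P d c L r σ w')) *
            ((-2 * c) * (r ℓ (lastIdx P) i - r ℓ (prevIdx P) i - (v i : ℝ) * L)) := by
      intro σ
      rw [← Finset.sum_fiberwise_of_maps_to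
        (g := fun w => w ℓ (prevIdx P)) (t := windowSet d W)
        (fun w hw => mem_windowSet_of_mem_WAll hw ℓ (prevIdx P))]
      refine Finset.sum_congr rfl fun v hv => Finset.sum_congr rfl fun w' hw' => ?_
      rw [(Finset.mem_filter.mp hw').2]
    rw [Finset.sum_congr rfl fun σ _ => step1 σ, Finset.sum_comm]
    refine Finset.sum_congr rfl fun v hv => ?_
    rw [Finset.sum_mul]
    exact Finset.sum_congr rfl fun σ _ => (Finset.sum_mul _ _ _).symm
  have hT2 : (∑ σ : Equiv.Perm (Fin N), ∑ w ∈ WAll N P d W,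
        Real.exp (-(β * Eperm N P d c L r σ w)) *
          ((-2 * c) * (r ℓ (lastIdx P) i + (w ℓ (lastIdx P) i : ℝ) * L - r (σ ℓ) 0 i)))
      = ∑ ℓ' : Fin N, ∑ v ∈ windowSet d W,
          (∑ σ ∈ Finset.univ.filter (fun σ : Equiv.Perm (Fin N) => σ ℓ = ℓ'),
            ∑ w' ∈ (WAll N P d W).filter (fun w' => w' ℓ (lastIdx P) = v),
              Real.exp (-(β * Eperm N P d c L r σ w'))) *
          ((-2 * c) * (r ℓ (lastIdx P) i + (v i : ℝ) * L - r ℓ' 0 i)) := by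
    have step1 : ∀ σ : Equiv.Perm (Fin N),
        (∑ w ∈ WAll N P d W, Real.exp (-(β * Eperm N P d c L r σ w)) *
          ((-2 * c) * (r ℓ (lastIdx P) i + (w ℓ (lastIdx P) i : ℝ) * L - r (σ ℓ) 0 i)))
        = ∑ v ∈ windowSet d W, ∑ w' ∈ (WAll N P d W).filter (fun w' => w' ℓ (lastIdx P) = v),
            Real.exp (-(β * Eperm N P d c L r σ w')) *
            ((-2 * c) * (r ℓ (lastIdx P) i + (v i : ℝ) * L - r (σ ℓ) 0 i)) := by
      intro σ
      rw [← Finset.sum_fiberwise_of_maps_to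
        (g := fun w => w ℓ (lastIdx P)) (t := windowSet d W)
        (fun w hw => mem_windowSet_of_mem_WAll hw ℓ (lastIdx P))]
      refine Finset.sum_congr rfl fun v hv => Finset.sum_congr rfl fun w' hw' => ?_
      rw [(Finset.mem_filter.mp hw').2]
    rw [Finset.sum_congr rfl fun σ _ => step1 σ]
    rw [← Finset.sum_fiberwise_of_maps_to (g := fun σ : Equiv.Perm (Fin N) => σ ℓ)
      (t := (Finset.univ : Finset (Fin N))) (fun σ _ => Finset.mem_univ _)]
    refine Finset.sum_congr rfl fun ℓ' _ => ?_
    rw [Finset.sum_comm]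
    refine Finset.sum_congr rfl fun v hv => ?_
    rw [Finset.sum_mul]
    refine Finset.sum_congr rfl fun σ hσ => ?_
    have hσℓ : σ ℓ = ℓ' := (Finset.mem_filter.mp hσ).2
    rw [Finset.sum_mul]
    exact Finset.sum_congr rfl fun w' _ => by rw [hσℓ]
  have hS : (∑ σ : Equiv.Perm (Fin N), ∑ w ∈ WAll N P d W,
        Real.exp (-(β * Eperm N P d c L r σ w)) * (-(β * Dv σ w)))
      = β * ((∑ σ : Equiv.Perm (Fin N), ∑ w ∈ WAll N P d W,
            Real.exp (-(β * Eperm N P d c L r σ w)) *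
              ((-2 * c) * (r ℓ (lastIdx P) i - r ℓ (prevIdx P) i - (w ℓ (prevIdx P) i : ℝ) * L)))
          + (∑ σ : Equiv.Perm (Fin N), ∑ w ∈ WAll N P d W,
            Real.exp (-(β * Eperm N P d c L r σ w)) *
              ((-2 * c) * (r ℓ (lastIdx P) i + (w ℓ (lastIdx P) i : ℝ) * L - r (σ ℓ) 0 i)))) := by
    rw [← Finset.sum_add_distrib]
    simp only [← Finset.sum_add_distrib, Finset.mul_sum]
    refine Finset.sum_congr rfl fun σ _ => Finset.sum_congr rfl fun w _ => ?_
    simp only [hDv]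
    ring
  rw [hS]
  have e1 : (∑ v ∈ windowSet d W,
        ((∑ σ : Equiv.Perm (Fin N), ∑ w' ∈ (WAll N P d W).filter (fun w' => w' ℓ (prevIdx P) = v),
            Real.exp (-(β * Eperm N P d c L r σ w'))) /
          ((Nat.factorial N : ℝ) * Zb N P d W β c L r)) *
          ((-2 * c) * (r ℓ (lastIdx P) i - r ℓ (prevIdx P) i - (v i : ℝ) * L)))
      = (∑ σ : Equiv.Perm (Fin N), ∑ w ∈ WAll N P d W,
          Real.exp (-(β * Eperm N P d c L r σ w)) *
            ((-2 * c) * (r ℓ (lastIdx P) i - r ℓ (prevIdx P) i - (w ℓ (prevIdx P) i : ℝ) * L))) /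
        ((Nat.factorial N : ℝ) * Zb N P d W β c L r) := by
    simp only [div_mul_eq_mul_div]
    rw [← Finset.sum_div, ← hT1]
  have e2 : (∑ ℓ' : Fin N, ∑ v ∈ windowSet d W,
        ((∑ σ ∈ Finset.univ.filter (fun σ : Equiv.Perm (Fin N) => σ ℓ = ℓ'),
            ∑ w' ∈ (WAll N P d W).filter (fun w' => w' ℓ (lastIdx P) = v),
              Real.exp (-(β * Eperm N P d c L r σ w'))) /
          ((Nat.factorial N : ℝ) * Zb N P d W β c L r)) *
          ((-2 * c) * (r ℓ (lastIdx P) i + (v i : ℝ) * L - r ℓ' 0 i)))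
      = (∑ σ : Equiv.Perm (Fin N), ∑ w ∈ WAll N P d W,
          Real.exp (-(β * Eperm N P d c L r σ w)) *
            ((-2 * c) * (r ℓ (lastIdx P) i + (w ℓ (lastIdx P) i : ℝ) * L - r (σ ℓ) 0 i))) /
        ((Nat.factorial N : ℝ) * Zb N P d W β c L r) := by
    simp only [div_mul_eq_mul_div, ← Finset.sum_div]
    rw [← hT2]
  rw [e1, e2]
  have hfac : ((Nat.factorial N : ℝ)) ≠ 0 := by positivity
  have key : ∀ S1 S2 : ℝ, -(1 / β) * (1 / (Nat.factorial N : ℝ) * (β * (S1 + S2)) / Zb N P d W β c L r)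
      = -(S1 / ((Nat.factorial N : ℝ) * Zb N P d W β c L r) + S2 / ((Nat.factorial N : ℝ) * Zb N P d W β c L r)) := by
    intro S1 S2; field_simp
  exact key _ _

end
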